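/- For n ∈ {1, 2} experts and every finite rationality level λ > 0, majority voting is an optimal robust aggregator: sup_{θ̂ ∈ Θ̂^ciid_λ} R(f^maj, θ̂) = min over aggregators f of sup_{θ̂ ∈ Θ̂^ciid_λ} R(f, θ̂). -/

import Mathlib

open Real Finset

/-- Quantal response function `ψ_λ(p) = 1/(1 + exp(2λ(1−2p)))`. -/
noncomputable def psi (lam p : ℝ) : ℝ := 1 / (1 + Real.exp (2 * lam * (1 - 2 * p)))

/-- A c.i.i.d. signal structure with finite signal set `Fin k`: prior `prior = Pr[ω = 1]`
and conditional signal laws `nu0 s = Pr[S_i = s | ω = 0]`, `nu1 s = Pr[S_i = s | ω = 1]`,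
common to all experts, with signals i.i.d. conditionally on `ω`. -/
structure SignalStructure where
  k : ℕ
  prior : ℝ
  nu0 : Fin k → ℝ
  nu1 : Fin k → ℝ
  prior_nonneg : 0 ≤ prior
  prior_le_one : prior ≤ 1
  nu0_nonneg : ∀ s, 0 ≤ nu0 s
  nu1_nonneg : ∀ s, 0 ≤ nu1 s
  nu0_sum : ∑ s, nu0 s = 1
  nu1_sum : ∑ s, nu1 s = 1

/-- Posterior `Pr_θ[ω = 1 | S_i = s]` (set to `0` on null signals). -/
noncomputable def posterior (θ : SignalStructure) (s : Fin θ.k) : ℝ :=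
  if θ.prior * θ.nu1 s + (1 - θ.prior) * θ.nu0 s = 0 then 0
  else θ.prior * θ.nu1 s / (θ.prior * θ.nu1 s + (1 - θ.prior) * θ.nu0 s)

/-- `Pr[X_i = 1 | ω = w]` when each expert reports `1` with probability
`ψ(Pr_θ[ω = 1 | S_i = s])` given its signal `s`. -/
noncomputable def reportProb (θ : SignalStructure) (ψ : ℝ → ℝ) (w : Bool) : ℝ :=
  ∑ s, (if w then θ.nu1 s else θ.nu0 s) * ψ (posterior θ s)

/-- The joint law of `(ω, X_1, …, X_n)` in which `Pr[ω = 1] = μ` and, conditionally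
on `ω`, the binary reports `X_i` are i.i.d. with `Pr[X_i = 1 | ω = 1] = q1` and
`Pr[X_i = 1 | ω = 0] = q0`. -/
noncomputable def repOf (n : ℕ) (μ q0 q1 : ℝ) : Bool → (Fin n → Bool) → ℝ :=
  fun w x =>
    (if w then μ else 1 - μ) *
      ∏ i, (if x i then (if w then q1 else q0) else 1 - (if w then q1 else q0))

/-- The report structure `rep(θ, ψ)`: the joint law of `(ω, X_1, …, X_n)` induced
by the signal structure `θ` and the response function `ψ`. -/
noncomputable def rep (n : ℕ) (θ : SignalStructure) (ψ : ℝ → ℝ) :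
    Bool → (Fin n → Bool) → ℝ :=
  repOf n θ.prior (reportProb θ ψ false) (reportProb θ ψ true)

/-- The set `Θ̂^ciid_λ` of report structures induced by all c.i.i.d. signal structures. -/
noncomputable def repSet (n : ℕ) (lam : ℝ) : Set (Bool → (Fin n → Bool) → ℝ) :=
  {r | ∃ θ : SignalStructure, rep n θ (psi lam) = r}

/-- `Pr[ω = w, X = x]` where `X = Σ_i X_i` counts the experts reporting `1`. -/
noncomputable def jointProb (n : ℕ) (r : Bool → (Fin n → Bool) → ℝ) (w : Bool) (x : ℕ) : ℝ :=
  ∑ v : Fin n → Bool,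
    if (Finset.univ.filter (fun i => v i = true)).card = x then r w v else 0

/-- Utility `U(f, θ̂) = Σ_x Pr[X=x]·(2Pr[ω=1|X=x]−1)·(2f(x)−1)
             = Σ_x (2f(x)−1)·(Pr[ω=1,X=x] − Pr[ω=0,X=x])`. -/
noncomputable def U (n : ℕ) (f : ℕ → ℝ) (r : Bool → (Fin n → Bool) → ℝ) : ℝ :=
  ∑ x ∈ Finset.range (n + 1),
    (2 * f x - 1) * (jointProb n r true x - jointProb n r false x)

/-- The omniscient aggregator `opt_θ̂`: sends `x` to `1`, `1/2`, `0` according as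
`Pr[ω=1 | X=x]` is `>`, `=`, `<` `1/2`. -/
noncomputable def optAgg (n : ℕ) (r : Bool → (Fin n → Bool) → ℝ) : ℕ → ℝ := fun x =>
  if jointProb n r false x < jointProb n r true x then 1
  else if jointProb n r true x = jointProb n r false x then 1 / 2
  else 0

/-- Regret `R(f, θ̂) = U(opt_θ̂, θ̂) − U(f, θ̂)`. -/
noncomputable def regret (n : ℕ) (f : ℕ → ℝ) (r : Bool → (Fin n → Bool) → ℝ) : ℝ :=
  U n (optAgg n r) r - U n f r

/-- An aggregator `f : {0,…,n} → [0,1]`. -/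
def IsAggregator (f : ℕ → ℝ) : Prop := ∀ x, 0 ≤ f x ∧ f x ≤ 1

/-- Majority voting `f^maj`. -/
noncomputable def fmaj (n : ℕ) : ℕ → ℝ := fun x =>
  if 2 * x < n then 0 else if 2 * x = n then 1 / 2 else 1

/-- Worst-case regret of aggregator `f` over all c.i.i.d.-induced report structures. -/
noncomputable def worstRegret (n : ℕ) (lam : ℝ) (f : ℕ → ℝ) : ℝ :=
  sSup {t : ℝ | ∃ r ∈ repSet n lam, t = regret n f r}

/-! ### Auxiliary lemmas -/

lemma psi_pos (lam p : ℝ) : 0 < psi lam p := by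
  have := Real.exp_pos (2 * lam * (1 - 2 * p))
  unfold psi; positivity

lemma psi_le_one (lam p : ℝ) : psi lam p ≤ 1 := by
  have := Real.exp_pos (2 * lam * (1 - 2 * p))
  rw [psi, div_le_one (by linarith)]; linarith

lemma psi_flip (lam p : ℝ) : psi lam (1 - p) = 1 - psi lam p := by
  have h1 : 2 * lam * (1 - 2 * (1 - p)) = -(2 * lam * (1 - 2 * p)) := by ring
  have he := Real.exp_pos (2 * lam * (1 - 2 * p))
  rw [psi, psi, h1, Real.exp_neg]
  field_simp
  ring

lemma psi_ge_half (lam p : ℝ) (hlam : 0 < lam) (hp : 1/2 ≤ p) : 1/2 ≤ psi lam p := by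
  have hE : Real.exp (2 * lam * (1 - 2 * p)) ≤ 1 := by
    rw [Real.exp_le_one_iff]; nlinarith
  have hE0 := Real.exp_pos (2 * lam * (1 - 2 * p))
  rw [psi, le_div_iff₀ (by linarith)]; linarith

lemma psi_le_half (lam p : ℝ) (hlam : 0 < lam) (hp : p ≤ 1/2) : psi lam p ≤ 1/2 := by
  have hE : 1 ≤ Real.exp (2 * lam * (1 - 2 * p)) := by
    rw [Real.one_le_exp_iff]; nlinarith
  have hE0 := Real.exp_pos (2 * lam * (1 - 2 * p))
  rw [psi, div_le_iff₀ (by linarith)]; linarith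

lemma reportProb_nonneg (θ : SignalStructure) (lam : ℝ) (w : Bool) :
    0 ≤ reportProb θ (psi lam) w := by
  apply Finset.sum_nonneg
  intro s _
  have h : 0 ≤ (if w then θ.nu1 s else θ.nu0 s) := by
    cases w <;> simp [θ.nu0_nonneg s, θ.nu1_nonneg s]
  exact mul_nonneg h (psi_pos lam _).le

lemma reportProb_le_one (θ : SignalStructure) (lam : ℝ) (w : Bool) :
    reportProb θ (psi lam) w ≤ 1 := by
  have h : reportProb θ (psi lam) w ≤ ∑ s, (if w then θ.nu1 s else θ.nu0 s) := by
    apply Finset.sum_le_sum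
    intro s _
    have h : 0 ≤ (if w then θ.nu1 s else θ.nu0 s) := by
      cases w <;> simp [θ.nu0_nonneg s, θ.nu1_nonneg s]
    calc (if w then θ.nu1 s else θ.nu0 s) * psi lam (posterior θ s)
        ≤ (if w then θ.nu1 s else θ.nu0 s) * 1 := by
          exact mul_le_mul_of_nonneg_left (psi_le_one lam _) h
      _ = _ := mul_one _
  cases w
  · simpa [θ.nu0_sum] using h
  · simpa [θ.nu1_sum] using h

/-- Key inequality: `μ(2q₁−1) − (1−μ)(2q₀−1) ≥ 0`. -/
lemma key_ineq (θ : SignalStructure) (lam : ℝ) (hlam : 0 < lam) :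
    0 ≤ θ.prior * (2 * reportProb θ (psi lam) true - 1)
      - (1 - θ.prior) * (2 * reportProb θ (psi lam) false - 1) := by
  set μ := θ.prior with hμ
  have hexpand : μ * (2 * reportProb θ (psi lam) true - 1)
      - (1 - μ) * (2 * reportProb θ (psi lam) false - 1)
      = ∑ s, (μ * θ.nu1 s - (1 - μ) * θ.nu0 s) * (2 * psi lam (posterior θ s) - 1) := by
    have h1 : ∑ s, (μ * θ.nu1 s - (1 - μ) * θ.nu0 s) * (2 * psi lam (posterior θ s) - 1)
        = (2 * μ * ∑ s, θ.nu1 s * psi lam (posterior θ s) - μ * ∑ s, θ.nu1 s)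
          - (2 * (1 - μ) * ∑ s, θ.nu0 s * psi lam (posterior θ s) - (1 - μ) * ∑ s, θ.nu0 s) := by
      rw [Finset.mul_sum, Finset.mul_sum, Finset.mul_sum, Finset.mul_sum,
        ← Finset.sum_sub_distrib, ← Finset.sum_sub_distrib, ← Finset.sum_sub_distrib]
      exact Finset.sum_congr rfl (fun s _ => by ring)
    rw [h1, θ.nu0_sum, θ.nu1_sum, reportProb, reportProb]
    norm_num
    ring
  rw [hexpand]
  apply Finset.sum_nonneg
  intro s _
  set a := μ * θ.nu1 s with hadef
  set b := (1 - μ) * θ.nu0 s with hbdef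
  have ha : 0 ≤ a := mul_nonneg θ.prior_nonneg (θ.nu1_nonneg s)
  have hb : 0 ≤ b := mul_nonneg (by linarith [θ.prior_le_one]) (θ.nu0_nonneg s)
  by_cases h : a + b = 0
  · have ha0 : a = 0 := by linarith
    have hb0 : b = 0 := by linarith
    rw [ha0, hb0]; ring_nf; simp
  · have hab : 0 < a + b := lt_of_le_of_ne (by linarith) (Ne.symm h)
    have hpost : posterior θ s = a / (a + b) := by
      rw [posterior]; rw [if_neg h]
    rcases le_total b a with hba | hba
    · have hp : 1/2 ≤ posterior θ s := by
        rw [hpost, le_div_iff₀ hab]; linarith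
      have := psi_ge_half lam _ hlam hp
      apply mul_nonneg <;> linarith
    · have hp : posterior θ s ≤ 1/2 := by
        rw [hpost, div_le_iff₀ hab]; linarith
      have := psi_le_half lam _ hlam hp
      nlinarith

/-! #### Closed forms for `jointProb` with one or two experts -/

lemma sum_fn_one (F : (Fin 1 → Bool) → ℝ) :
    ∑ v : Fin 1 → Bool, F v = F (fun _ => true) + F (fun _ => false) := by
  rw [← Equiv.sum_comp (Equiv.funUnique (Fin 1) Bool).symm F, Fintype.sum_bool]
  rfl

lemma sum_fn_two (F : (Fin 2 → Bool) → ℝ) :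
    ∑ v : Fin 2 → Bool, F v = F ![true, true] + F ![true, false]
      + F ![false, true] + F ![false, false] := by
  have h : ∀ a b : Bool, (piFinTwoEquiv (fun _ => Bool)).symm (a, b) = ![a, b] := by
    intro a b; funext i; fin_cases i <;> rfl
  rw [← Equiv.sum_comp (piFinTwoEquiv (fun _ => Bool)).symm F, Fintype.sum_prod_type,
    Fintype.sum_bool, Fintype.sum_bool, Fintype.sum_bool, h, h, h, h]
  ring

lemma card1t : (Finset.univ.filter (fun i => ((fun _ => true) : Fin 1 → Bool) i = true)).card = 1 := by decide
lemma card1f : (Finset.univ.filter (fun i => ((fun _ => false) : Fin 1 → Bool) i = true)).card = 0 := by decide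
lemma card2tt : (Finset.univ.filter (fun i => (![true,true] : Fin 2 → Bool) i = true)).card = 2 := by decide
lemma card2tf : (Finset.univ.filter (fun i => (![true,false] : Fin 2 → Bool) i = true)).card = 1 := by decide
lemma card2ft : (Finset.univ.filter (fun i => (![false,true] : Fin 2 → Bool) i = true)).card = 1 := by decide
lemma card2ff : (Finset.univ.filter (fun i => (![false,false] : Fin 2 → Bool) i = true)).card = 0 := by decide

lemma jp1 (μ q0 q1 : ℝ) (w : Bool) (x : ℕ) :
    jointProb 1 (repOf 1 μ q0 q1) w x
      = (if w then μ else 1 - μ) *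
          (if x = 0 then 1 - (if w then q1 else q0)
           else if x = 1 then (if w then q1 else q0) else 0) := by
  rw [jointProb, sum_fn_one, card1t, card1f]
  rcases Nat.lt_or_ge x 2 with hx | hx
  · interval_cases x <;> cases w <;>
      · simp [repOf, Fin.prod_univ_one]
        try ring
  · have h0 : x ≠ 0 := by omega
    have h1 : x ≠ 1 := by omega
    simp [h0, h1, Ne.symm h0, Ne.symm h1]

lemma jp2 (μ q0 q1 : ℝ) (w : Bool) (x : ℕ) :
    jointProb 2 (repOf 2 μ q0 q1) w x
      = (if w then μ else 1 - μ) *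
          (if x = 0 then (1 - (if w then q1 else q0)) * (1 - (if w then q1 else q0))
           else if x = 1 then 2 * (if w then q1 else q0) * (1 - (if w then q1 else q0))
           else if x = 2 then (if w then q1 else q0) * (if w then q1 else q0) else 0) := by
  rw [jointProb, sum_fn_two, card2tt, card2tf, card2ft, card2ff]
  rcases Nat.lt_or_ge x 3 with hx | hx
  · interval_cases x <;> cases w <;>
      · simp [repOf, Fin.prod_univ_two]
        try ring
  · have h0 : x ≠ 0 := by omega
    have h1 : x ≠ 1 := by omega
    have h2 : x ≠ 2 := by omega
    simp [h0, h1, h2, Ne.symm h0, Ne.symm h1, Ne.symm h2]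

/-! #### The flipped signal structure -/

/-- Flip `ω ↦ 1 − ω`. -/
def flipS (θ : SignalStructure) : SignalStructure where
  k := θ.k
  prior := 1 - θ.prior
  nu0 := θ.nu1
  nu1 := θ.nu0
  prior_nonneg := by linarith [θ.prior_le_one]
  prior_le_one := by linarith [θ.prior_nonneg]
  nu0_nonneg := θ.nu1_nonneg
  nu1_nonneg := θ.nu0_nonneg
  nu0_sum := θ.nu1_sum
  nu1_sum := θ.nu0_sum

lemma posterior_flip (θ : SignalStructure) (s : Fin θ.k)
    (hD : θ.prior * θ.nu1 s + (1 - θ.prior) * θ.nu0 s ≠ 0) :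
    posterior (flipS θ) s = 1 - posterior θ s := by
  have hc : (flipS θ).prior * (flipS θ).nu1 s + (1 - (flipS θ).prior) * (flipS θ).nu0 s
      = θ.prior * θ.nu1 s + (1 - θ.prior) * θ.nu0 s := by
    simp only [flipS]; ring
  unfold posterior
  rw [hc, if_neg hD, if_neg hD]
  simp only [flipS]
  field_simp
  ring

lemma reportProb_flip_true (θ : SignalStructure) (lam : ℝ) (hμ : θ.prior ≠ 1) :
    reportProb (flipS θ) (psi lam) true = 1 - reportProb θ (psi lam) false := by
  have hkey : ∀ s : Fin θ.k,
      θ.nu0 s * psi lam (posterior (flipS θ) s)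
        = θ.nu0 s * (1 - psi lam (posterior θ s)) := by
    intro s
    by_cases hν : θ.nu0 s = 0
    · rw [hν]; ring
    · have h1 : (0:ℝ) < 1 - θ.prior := by
        rcases lt_or_eq_of_le θ.prior_le_one with h | h
        · linarith
        · exact absurd h hμ
      have hν' : 0 < θ.nu0 s := lt_of_le_of_ne (θ.nu0_nonneg s) (Ne.symm hν)
      have hD : (0:ℝ) < θ.prior * θ.nu1 s + (1 - θ.prior) * θ.nu0 s :=
        add_pos_of_nonneg_of_pos (mul_nonneg θ.prior_nonneg (θ.nu1_nonneg s))
          (mul_pos h1 hν')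
      rw [posterior_flip θ s hD.ne', psi_flip]
  calc reportProb (flipS θ) (psi lam) true
      = ∑ s : Fin θ.k, θ.nu0 s * psi lam (posterior (flipS θ) s) := by
        rw [reportProb]; rfl
    _ = ∑ s : Fin θ.k, θ.nu0 s * (1 - psi lam (posterior θ s)) :=
        Finset.sum_congr rfl (fun s _ => hkey s)
    _ = (∑ s : Fin θ.k, θ.nu0 s) - ∑ s : Fin θ.k, θ.nu0 s * psi lam (posterior θ s) := by
        rw [← Finset.sum_sub_distrib]
        exact Finset.sum_congr rfl (fun s _ => by ring)
    _ = 1 - reportProb θ (psi lam) false := by rw [θ.nu0_sum, reportProb]; norm_num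

lemma reportProb_flip_false (θ : SignalStructure) (lam : ℝ) (hμ : θ.prior ≠ 0) :
    reportProb (flipS θ) (psi lam) false = 1 - reportProb θ (psi lam) true := by
  have hkey : ∀ s : Fin θ.k,
      θ.nu1 s * psi lam (posterior (flipS θ) s)
        = θ.nu1 s * (1 - psi lam (posterior θ s)) := by
    intro s
    by_cases hν : θ.nu1 s = 0
    · rw [hν]; ring
    · have h1 : (0:ℝ) < θ.prior := lt_of_le_of_ne θ.prior_nonneg (Ne.symm hμ)
      have hν' : 0 < θ.nu1 s := lt_of_le_of_ne (θ.nu1_nonneg s) (Ne.symm hν)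
      have hD : (0:ℝ) < θ.prior * θ.nu1 s + (1 - θ.prior) * θ.nu0 s :=
        add_pos_of_pos_of_nonneg (mul_pos h1 hν')
          (mul_nonneg (by linarith [θ.prior_le_one]) (θ.nu0_nonneg s))
      rw [posterior_flip θ s hD.ne', psi_flip]
  calc reportProb (flipS θ) (psi lam) false
      = ∑ s : Fin θ.k, θ.nu1 s * psi lam (posterior (flipS θ) s) := by
        rw [reportProb]; rfl
    _ = ∑ s : Fin θ.k, θ.nu1 s * (1 - psi lam (posterior θ s)) :=
        Finset.sum_congr rfl (fun s _ => hkey s)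
    _ = (∑ s : Fin θ.k, θ.nu1 s) - ∑ s : Fin θ.k, θ.nu1 s * psi lam (posterior θ s) := by
        rw [← Finset.sum_sub_distrib]
        exact Finset.sum_congr rfl (fun s _ => by ring)
    _ = 1 - reportProb θ (psi lam) true := by rw [θ.nu1_sum, reportProb]; norm_num

/-! #### Generic regret lemmas -/

lemma U_opt (n : ℕ) (r : Bool → (Fin n → Bool) → ℝ) :
    U n (optAgg n r) r
      = ∑ x ∈ Finset.range (n + 1), |jointProb n r true x - jointProb n r false x| := by
  rw [U]
  apply Finset.sum_congr rfl
  intro x _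
  rw [optAgg]
  rcases lt_trichotomy (jointProb n r false x) (jointProb n r true x) with h | h | h
  · rw [if_pos h, abs_of_pos (by linarith)]; ring
  · rw [if_neg (by rw [h]; exact lt_irrefl _), if_pos h.symm, h.symm]
    simp
  · rw [if_neg (by linarith), if_neg (by intro hc; linarith), abs_of_neg (by linarith)]
    ring

lemma regret_eq (n : ℕ) (f : ℕ → ℝ) (r : Bool → (Fin n → Bool) → ℝ) :
    regret n f r
      = (∑ x ∈ Finset.range (n + 1), |jointProb n r true x - jointProb n r false x|)
        - U n f r := by
  rw [regret, U_opt]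

lemma term_le {c d : ℝ} (h0 : 0 ≤ c) (h1 : c ≤ 1) : (2 * c - 1) * d ≤ |d| := by
  calc (2 * c - 1) * d ≤ |(2 * c - 1) * d| := le_abs_self _
    _ = |2 * c - 1| * |d| := abs_mul _ _
    _ ≤ 1 * |d| := by
        apply mul_le_mul_of_nonneg_right _ (abs_nonneg d)
        rw [abs_le]; constructor <;> linarith
    _ = |d| := one_mul _

lemma term_ge {c d : ℝ} (h0 : 0 ≤ c) (h1 : c ≤ 1) : -|d| ≤ (2 * c - 1) * d := by
  have := term_le (c := 1 - c) (d := d) (by linarith) (by linarith)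
  nlinarith [this]

lemma U_le (n : ℕ) (f : ℕ → ℝ) (hf : IsAggregator f) (r : Bool → (Fin n → Bool) → ℝ) :
    U n f r ≤ ∑ x ∈ Finset.range (n + 1), |jointProb n r true x - jointProb n r false x| := by
  rw [U]
  apply Finset.sum_le_sum
  intro x _
  exact term_le (hf x).1 (hf x).2

lemma U_ge (n : ℕ) (f : ℕ → ℝ) (hf : IsAggregator f) (r : Bool → (Fin n → Bool) → ℝ) :
    -(∑ x ∈ Finset.range (n + 1), |jointProb n r true x - jointProb n r false x|) ≤ U n f r := by
  rw [U, ← Finset.sum_neg_distrib]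
  apply Finset.sum_le_sum
  intro x _
  exact term_ge (hf x).1 (hf x).2

lemma regret_nonneg (n : ℕ) (f : ℕ → ℝ) (hf : IsAggregator f)
    (r : Bool → (Fin n → Bool) → ℝ) : 0 ≤ regret n f r := by
  rw [regret_eq]
  have := U_le n f hf r
  linarith

lemma regret_le (n : ℕ) (f : ℕ → ℝ) (hf : IsAggregator f) (r : Bool → (Fin n → Bool) → ℝ) :
    regret n f r
      ≤ 2 * ∑ x ∈ Finset.range (n + 1), |jointProb n r true x - jointProb n r false x| := by
  rw [regret_eq]
  have := U_ge n f hf r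
  linarith

lemma fmaj_agg (n : ℕ) : IsAggregator (fmaj n) := by
  intro x
  rw [fmaj]
  split_ifs <;> norm_num

/-! #### One expert -/

lemma unit_mul {a b : ℝ} (ha : 0 ≤ a) (ha1 : a ≤ 1) (hb : 0 ≤ b) (hb1 : b ≤ 1) :
    0 ≤ a * b ∧ a * b ≤ 1 :=
  ⟨mul_nonneg ha hb, by nlinarith⟩

lemma abs_sub_le_one {a b : ℝ} (ha : 0 ≤ a) (ha1 : a ≤ 1) (hb : 0 ≤ b) (hb1 : b ≤ 1) :
    |a - b| ≤ 1 :=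
  abs_le.mpr ⟨by linarith, by linarith⟩

lemma dom1 (lam : ℝ) (hlam : 0 < lam) (θ : SignalStructure) (f : ℕ → ℝ) (hf : IsAggregator f) :
    regret 1 (fmaj 1) (rep 1 θ (psi lam))
      ≤ (regret 1 f (rep 1 θ (psi lam))
          + regret 1 (fun x => 1 - f (1 - x)) (rep 1 θ (psi lam))) / 2 := by
  have hK := key_ineq θ lam hlam
  have ht0 : jointProb 1 (rep 1 θ (psi lam)) true 0
      = θ.prior * (1 - reportProb θ (psi lam) true) := by rw [rep, jp1]; norm_num
  have hf0 : jointProb 1 (rep 1 θ (psi lam)) false 0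
      = (1 - θ.prior) * (1 - reportProb θ (psi lam) false) := by rw [rep, jp1]; norm_num
  have ht1 : jointProb 1 (rep 1 θ (psi lam)) true 1
      = θ.prior * reportProb θ (psi lam) true := by rw [rep, jp1]; norm_num
  have hf1 : jointProb 1 (rep 1 θ (psi lam)) false 1
      = (1 - θ.prior) * reportProb θ (psi lam) false := by rw [rep, jp1]; norm_num
  have hm0 : fmaj 1 0 = 0 := by rw [fmaj]; norm_num
  have hm1 : fmaj 1 1 = 1 := by rw [fmaj]; norm_num
  have eU : 2 * U 1 (fmaj 1) (rep 1 θ (psi lam))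
      - (U 1 f (rep 1 θ (psi lam)) + U 1 (fun x => 1 - f (1 - x)) (rep 1 θ (psi lam)))
      = 2 * ((1 + f 0 - f 1) *
          (θ.prior * (2 * reportProb θ (psi lam) true - 1)
            - (1 - θ.prior) * (2 * reportProb θ (psi lam) false - 1))) := by
    simp only [U, Finset.sum_range_succ, Finset.sum_range_zero, zero_add,
      ht0, hf0, ht1, hf1, hm0, hm1]
    norm_num
    ring
  have hcoef : 0 ≤ 1 + f 0 - f 1 := by
    have := (hf 0).1; have := (hf 1).2; linarith
  have hprod : 0 ≤ 2 * ((1 + f 0 - f 1) *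
      (θ.prior * (2 * reportProb θ (psi lam) true - 1)
        - (1 - θ.prior) * (2 * reportProb θ (psi lam) false - 1))) := by
    have := mul_nonneg hcoef hK; linarith
  rw [regret_eq, regret_eq, regret_eq]
  linarith [eU, hprod]

lemma flip1 (lam : ℝ) (θ : SignalStructure) (f : ℕ → ℝ) :
    regret 1 f (rep 1 (flipS θ) (psi lam))
      = regret 1 (fun x => 1 - f (1 - x)) (rep 1 θ (psi lam)) := by
  have hp : (flipS θ).prior = 1 - θ.prior := rfl
  have ht0 : jointProb 1 (rep 1 θ (psi lam)) true 0
      = θ.prior * (1 - reportProb θ (psi lam) true) := by rw [rep, jp1]; norm_num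
  have hf0 : jointProb 1 (rep 1 θ (psi lam)) false 0
      = (1 - θ.prior) * (1 - reportProb θ (psi lam) false) := by rw [rep, jp1]; norm_num
  have ht1 : jointProb 1 (rep 1 θ (psi lam)) true 1
      = θ.prior * reportProb θ (psi lam) true := by rw [rep, jp1]; norm_num
  have hf1 : jointProb 1 (rep 1 θ (psi lam)) false 1
      = (1 - θ.prior) * reportProb θ (psi lam) false := by rw [rep, jp1]; norm_num
  have hT0 : jointProb 1 (rep 1 (flipS θ) (psi lam)) true 0
      = (1 - θ.prior) * (1 - reportProb (flipS θ) (psi lam) true) := by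
    rw [rep, jp1, hp]; norm_num
  have hF0 : jointProb 1 (rep 1 (flipS θ) (psi lam)) false 0
      = θ.prior * (1 - reportProb (flipS θ) (psi lam) false) := by
    rw [rep, jp1, hp]; norm_num
  have hT1 : jointProb 1 (rep 1 (flipS θ) (psi lam)) true 1
      = (1 - θ.prior) * reportProb (flipS θ) (psi lam) true := by
    rw [rep, jp1, hp]; norm_num
  have hF1 : jointProb 1 (rep 1 (flipS θ) (psi lam)) false 1
      = θ.prior * reportProb (flipS θ) (psi lam) false := by
    rw [rep, jp1, hp]; norm_num
  have hA : (1 - θ.prior) * (1 - reportProb (flipS θ) (psi lam) true)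
        - θ.prior * (1 - reportProb (flipS θ) (psi lam) false)
      = -(θ.prior * reportProb θ (psi lam) true
          - (1 - θ.prior) * reportProb θ (psi lam) false) := by
    rcases eq_or_ne θ.prior 1 with h1 | h1
    · have hQ0 : reportProb (flipS θ) (psi lam) false
          = 1 - reportProb θ (psi lam) true :=
        reportProb_flip_false θ lam (by rw [h1]; norm_num)
      rw [hQ0, h1]; ring
    · rcases eq_or_ne θ.prior 0 with h0 | h0
      · have hQ1 : reportProb (flipS θ) (psi lam) true
            = 1 - reportProb θ (psi lam) false :=
          reportProb_flip_true θ lam h1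
        rw [hQ1, h0]; ring
      · rw [reportProb_flip_true θ lam h1, reportProb_flip_false θ lam h0]; ring
  have hB : (1 - θ.prior) * (reportProb (flipS θ) (psi lam) true)
        - θ.prior * (reportProb (flipS θ) (psi lam) false)
      = -(θ.prior * (1 - reportProb θ (psi lam) true)
          - (1 - θ.prior) * (1 - reportProb θ (psi lam) false)) := by
    rcases eq_or_ne θ.prior 1 with h1 | h1
    · have hQ0 : reportProb (flipS θ) (psi lam) false
          = 1 - reportProb θ (psi lam) true :=
        reportProb_flip_false θ lam (by rw [h1]; norm_num)
      rw [hQ0, h1]; ring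
    · rcases eq_or_ne θ.prior 0 with h0 | h0
      · have hQ1 : reportProb (flipS θ) (psi lam) true
            = 1 - reportProb θ (psi lam) false :=
          reportProb_flip_true θ lam h1
        rw [hQ1, h0]; ring
      · rw [reportProb_flip_true θ lam h1, reportProb_flip_false θ lam h0]; ring
  rw [regret_eq, regret_eq]
  simp only [U, Finset.sum_range_succ, Finset.sum_range_zero, zero_add,
    ht0, hf0, ht1, hf1, hT0, hF0, hT1, hF1]
  rw [hA, hB, abs_neg, abs_neg]
  norm_num
  ring

lemma bound1 (lam : ℝ) (θ : SignalStructure) (f : ℕ → ℝ) (hf : IsAggregator f) :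
    regret 1 f (rep 1 θ (psi lam)) ≤ 6 := by
  have h := regret_le 1 f hf (rep 1 θ (psi lam))
  have ht0 : jointProb 1 (rep 1 θ (psi lam)) true 0
      = θ.prior * (1 - reportProb θ (psi lam) true) := by rw [rep, jp1]; norm_num
  have hf0 : jointProb 1 (rep 1 θ (psi lam)) false 0
      = (1 - θ.prior) * (1 - reportProb θ (psi lam) false) := by rw [rep, jp1]; norm_num
  have ht1 : jointProb 1 (rep 1 θ (psi lam)) true 1
      = θ.prior * reportProb θ (psi lam) true := by rw [rep, jp1]; norm_num
  have hf1 : jointProb 1 (rep 1 θ (psi lam)) false 1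
      = (1 - θ.prior) * reportProb θ (psi lam) false := by rw [rep, jp1]; norm_num
  have hμ0 := θ.prior_nonneg
  have hμ1 := θ.prior_le_one
  have hq00 := reportProb_nonneg θ lam false
  have hq01 := reportProb_le_one θ lam false
  have hq10 := reportProb_nonneg θ lam true
  have hq11 := reportProb_le_one θ lam true
  have b0 : |jointProb 1 (rep 1 θ (psi lam)) true 0 - jointProb 1 (rep 1 θ (psi lam)) false 0| ≤ 1 := by
    rw [ht0, hf0]
    have u1 := unit_mul hμ0 hμ1 (by linarith : (0:ℝ) ≤ 1 - reportProb θ (psi lam) true) (by linarith)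
    have u2 := unit_mul (by linarith : (0:ℝ) ≤ 1 - θ.prior) (by linarith)
      (by linarith : (0:ℝ) ≤ 1 - reportProb θ (psi lam) false) (by linarith)
    exact abs_sub_le_one u1.1 u1.2 u2.1 u2.2
  have b1 : |jointProb 1 (rep 1 θ (psi lam)) true 1 - jointProb 1 (rep 1 θ (psi lam)) false 1| ≤ 1 := by
    rw [ht1, hf1]
    have u1 := unit_mul hμ0 hμ1 hq10 hq11
    have u2 := unit_mul (by linarith : (0:ℝ) ≤ 1 - θ.prior) (by linarith) hq00 hq01
    exact abs_sub_le_one u1.1 u1.2 u2.1 u2.2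
  have e : ∑ x ∈ Finset.range 2,
      |jointProb 1 (rep 1 θ (psi lam)) true x - jointProb 1 (rep 1 θ (psi lam)) false x|
      = |jointProb 1 (rep 1 θ (psi lam)) true 0 - jointProb 1 (rep 1 θ (psi lam)) false 0|
        + |jointProb 1 (rep 1 θ (psi lam)) true 1 - jointProb 1 (rep 1 θ (psi lam)) false 1| := by
    rw [Finset.sum_range_succ, Finset.sum_range_one]
  rw [show (1:ℕ) + 1 = 2 from rfl] at h
  rw [e] at h
  linarith

lemma bdd1 (lam : ℝ) (f : ℕ → ℝ) (hf : IsAggregator f) :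
    BddAbove {t : ℝ | ∃ r ∈ repSet 1 lam, t = regret 1 f r} := by
  refine ⟨6, ?_⟩
  rintro t ⟨r, ⟨θ, rfl⟩, rfl⟩
  exact bound1 lam θ f hf

noncomputable def theta0 : SignalStructure where
  k := 1
  prior := 1/2
  nu0 := fun _ => 1
  nu1 := fun _ => 1
  prior_nonneg := by norm_num
  prior_le_one := by norm_num
  nu0_nonneg := fun _ => by norm_num
  nu1_nonneg := fun _ => by norm_num
  nu0_sum := by simp
  nu1_sum := by simp

lemma worst_nonneg (n : ℕ) (lam : ℝ) (f : ℕ → ℝ) (hf : IsAggregator f)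
    (hbdd : BddAbove {t : ℝ | ∃ r ∈ repSet n lam, t = regret n f r}) :
    0 ≤ worstRegret n lam f := by
  have hmem : regret n f (rep n theta0 (psi lam))
      ∈ {t : ℝ | ∃ r ∈ repSet n lam, t = regret n f r} :=
    ⟨rep n theta0 (psi lam), ⟨theta0, rfl⟩, rfl⟩
  exact le_trans (regret_nonneg n f hf _) (le_csSup hbdd hmem)

lemma wle1 (lam : ℝ) (hlam : 0 < lam) (f : ℕ → ℝ) (hf : IsAggregator f) :
    worstRegret 1 lam (fmaj 1) ≤ worstRegret 1 lam f := by
  have hbdd := bdd1 lam f hf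
  apply Real.sSup_le _ (worst_nonneg 1 lam f hf hbdd)
  rintro t ⟨r, ⟨θ, rfl⟩, rfl⟩
  have h1 := dom1 lam hlam θ f hf
  have h2 := flip1 lam θ f
  have h3 : regret 1 f (rep 1 θ (psi lam)) ≤ worstRegret 1 lam f :=
    le_csSup hbdd ⟨_, ⟨θ, rfl⟩, rfl⟩
  have h4 : regret 1 f (rep 1 (flipS θ) (psi lam)) ≤ worstRegret 1 lam f :=
    le_csSup hbdd ⟨_, ⟨flipS θ, rfl⟩, rfl⟩
  rw [h2] at h4
  linarith

/-! #### Two experts -/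

lemma dom2 (lam : ℝ) (hlam : 0 < lam) (θ : SignalStructure) (f : ℕ → ℝ) (hf : IsAggregator f) :
    regret 2 (fmaj 2) (rep 2 θ (psi lam))
      ≤ (regret 2 f (rep 2 θ (psi lam))
          + regret 2 (fun x => 1 - f (2 - x)) (rep 2 θ (psi lam))) / 2 := by
  have hK := key_ineq θ lam hlam
  have ht0 : jointProb 2 (rep 2 θ (psi lam)) true 0
      = θ.prior * ((1 - reportProb θ (psi lam) true) * (1 - reportProb θ (psi lam) true)) := by
    rw [rep, jp2]; norm_num
  have hf0 : jointProb 2 (rep 2 θ (psi lam)) false 0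
      = (1 - θ.prior) * ((1 - reportProb θ (psi lam) false) * (1 - reportProb θ (psi lam) false)) := by
    rw [rep, jp2]; norm_num
  have ht1 : jointProb 2 (rep 2 θ (psi lam)) true 1
      = θ.prior * (2 * reportProb θ (psi lam) true * (1 - reportProb θ (psi lam) true)) := by
    rw [rep, jp2]; norm_num
  have hf1 : jointProb 2 (rep 2 θ (psi lam)) false 1
      = (1 - θ.prior) * (2 * reportProb θ (psi lam) false * (1 - reportProb θ (psi lam) false)) := by
    rw [rep, jp2]; norm_num
  have ht2 : jointProb 2 (rep 2 θ (psi lam)) true 2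
      = θ.prior * (reportProb θ (psi lam) true * reportProb θ (psi lam) true) := by
    rw [rep, jp2]; norm_num
  have hf2 : jointProb 2 (rep 2 θ (psi lam)) false 2
      = (1 - θ.prior) * (reportProb θ (psi lam) false * reportProb θ (psi lam) false) := by
    rw [rep, jp2]; norm_num
  have hm0 : fmaj 2 0 = 0 := by rw [fmaj]; norm_num
  have hm1 : fmaj 2 1 = 1/2 := by rw [fmaj]; norm_num
  have hm2 : fmaj 2 2 = 1 := by rw [fmaj]; norm_num
  have eU : 2 * U 2 (fmaj 2) (rep 2 θ (psi lam))
      - (U 2 f (rep 2 θ (psi lam)) + U 2 (fun x => 1 - f (2 - x)) (rep 2 θ (psi lam)))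
      = 2 * ((1 + f 0 - f 2) *
          (θ.prior * (2 * reportProb θ (psi lam) true - 1)
            - (1 - θ.prior) * (2 * reportProb θ (psi lam) false - 1))) := by
    simp only [U, Finset.sum_range_succ, Finset.sum_range_zero, zero_add,
      ht0, hf0, ht1, hf1, ht2, hf2, hm0, hm1, hm2]
    norm_num
    ring
  have hcoef : 0 ≤ 1 + f 0 - f 2 := by
    have := (hf 0).1; have := (hf 2).2; linarith
  have hprod : 0 ≤ 2 * ((1 + f 0 - f 2) *
      (θ.prior * (2 * reportProb θ (psi lam) true - 1)
        - (1 - θ.prior) * (2 * reportProb θ (psi lam) false - 1))) := by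
    have := mul_nonneg hcoef hK; linarith
  rw [regret_eq, regret_eq, regret_eq]
  linarith [eU, hprod]

lemma flip2 (lam : ℝ) (θ : SignalStructure) (f : ℕ → ℝ) :
    regret 2 f (rep 2 (flipS θ) (psi lam))
      = regret 2 (fun x => 1 - f (2 - x)) (rep 2 θ (psi lam)) := by
  have hp : (flipS θ).prior = 1 - θ.prior := rfl
  have ht0 : jointProb 2 (rep 2 θ (psi lam)) true 0
      = θ.prior * ((1 - reportProb θ (psi lam) true) * (1 - reportProb θ (psi lam) true)) := by
    rw [rep, jp2]; norm_num
  have hf0 : jointProb 2 (rep 2 θ (psi lam)) false 0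
      = (1 - θ.prior) * ((1 - reportProb θ (psi lam) false) * (1 - reportProb θ (psi lam) false)) := by
    rw [rep, jp2]; norm_num
  have ht1 : jointProb 2 (rep 2 θ (psi lam)) true 1
      = θ.prior * (2 * reportProb θ (psi lam) true * (1 - reportProb θ (psi lam) true)) := by
    rw [rep, jp2]; norm_num
  have hf1 : jointProb 2 (rep 2 θ (psi lam)) false 1
      = (1 - θ.prior) * (2 * reportProb θ (psi lam) false * (1 - reportProb θ (psi lam) false)) := by
    rw [rep, jp2]; norm_num
  have ht2 : jointProb 2 (rep 2 θ (psi lam)) true 2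
      = θ.prior * (reportProb θ (psi lam) true * reportProb θ (psi lam) true) := by
    rw [rep, jp2]; norm_num
  have hf2 : jointProb 2 (rep 2 θ (psi lam)) false 2
      = (1 - θ.prior) * (reportProb θ (psi lam) false * reportProb θ (psi lam) false) := by
    rw [rep, jp2]; norm_num
  have hT0 : jointProb 2 (rep 2 (flipS θ) (psi lam)) true 0
      = (1 - θ.prior) * ((1 - reportProb (flipS θ) (psi lam) true) * (1 - reportProb (flipS θ) (psi lam) true)) := by
    rw [rep, jp2, hp]; norm_num
  have hF0 : jointProb 2 (rep 2 (flipS θ) (psi lam)) false 0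
      = θ.prior * ((1 - reportProb (flipS θ) (psi lam) false) * (1 - reportProb (flipS θ) (psi lam) false)) := by
    rw [rep, jp2, hp]; norm_num
  have hT1 : jointProb 2 (rep 2 (flipS θ) (psi lam)) true 1
      = (1 - θ.prior) * (2 * reportProb (flipS θ) (psi lam) true * (1 - reportProb (flipS θ) (psi lam) true)) := by
    rw [rep, jp2, hp]; norm_num
  have hF1 : jointProb 2 (rep 2 (flipS θ) (psi lam)) false 1
      = θ.prior * (2 * reportProb (flipS θ) (psi lam) false * (1 - reportProb (flipS θ) (psi lam) false)) := by
    rw [rep, jp2, hp]; norm_num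
  have hT2 : jointProb 2 (rep 2 (flipS θ) (psi lam)) true 2
      = (1 - θ.prior) * (reportProb (flipS θ) (psi lam) true * reportProb (flipS θ) (psi lam) true) := by
    rw [rep, jp2, hp]; norm_num
  have hF2 : jointProb 2 (rep 2 (flipS θ) (psi lam)) false 2
      = θ.prior * (reportProb (flipS θ) (psi lam) false * reportProb (flipS θ) (psi lam) false) := by
    rw [rep, jp2, hp]; norm_num
  have hA : (1 - θ.prior) * ((1 - reportProb (flipS θ) (psi lam) true) * (1 - reportProb (flipS θ) (psi lam) true))
        - θ.prior * ((1 - reportProb (flipS θ) (psi lam) false) * (1 - reportProb (flipS θ) (psi lam) false))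
      = -(θ.prior * (reportProb θ (psi lam) true * reportProb θ (psi lam) true)
          - (1 - θ.prior) * (reportProb θ (psi lam) false * reportProb θ (psi lam) false)) := by
    rcases eq_or_ne θ.prior 1 with h1 | h1
    · rw [reportProb_flip_false θ lam (by rw [h1]; norm_num), h1]; ring
    · rcases eq_or_ne θ.prior 0 with h0 | h0
      · rw [reportProb_flip_true θ lam h1, h0]; ring
      · rw [reportProb_flip_true θ lam h1, reportProb_flip_false θ lam h0]; ring
  have hB : (1 - θ.prior) * (2 * reportProb (flipS θ) (psi lam) true * (1 - reportProb (flipS θ) (psi lam) true))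
        - θ.prior * (2 * reportProb (flipS θ) (psi lam) false * (1 - reportProb (flipS θ) (psi lam) false))
      = -(θ.prior * (2 * reportProb θ (psi lam) true * (1 - reportProb θ (psi lam) true))
          - (1 - θ.prior) * (2 * reportProb θ (psi lam) false * (1 - reportProb θ (psi lam) false))) := by
    rcases eq_or_ne θ.prior 1 with h1 | h1
    · rw [reportProb_flip_false θ lam (by rw [h1]; norm_num), h1]; ring
    · rcases eq_or_ne θ.prior 0 with h0 | h0
      · rw [reportProb_flip_true θ lam h1, h0]; ring
      · rw [reportProb_flip_true θ lam h1, reportProb_flip_false θ lam h0]; ring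
  have hC : (1 - θ.prior) * (reportProb (flipS θ) (psi lam) true * reportProb (flipS θ) (psi lam) true)
        - θ.prior * (reportProb (flipS θ) (psi lam) false * reportProb (flipS θ) (psi lam) false)
      = -(θ.prior * ((1 - reportProb θ (psi lam) true) * (1 - reportProb θ (psi lam) true))
          - (1 - θ.prior) * ((1 - reportProb θ (psi lam) false) * (1 - reportProb θ (psi lam) false))) := by
    rcases eq_or_ne θ.prior 1 with h1 | h1
    · rw [reportProb_flip_false θ lam (by rw [h1]; norm_num), h1]; ring
    · rcases eq_or_ne θ.prior 0 with h0 | h0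
      · rw [reportProb_flip_true θ lam h1, h0]; ring
      · rw [reportProb_flip_true θ lam h1, reportProb_flip_false θ lam h0]; ring
  rw [regret_eq, regret_eq]
  simp only [U, Finset.sum_range_succ, Finset.sum_range_zero, zero_add,
    ht0, hf0, ht1, hf1, ht2, hf2, hT0, hF0, hT1, hF1, hT2, hF2]
  rw [hA, hB, hC, abs_neg, abs_neg, abs_neg]
  norm_num
  ring

lemma bound2 (lam : ℝ) (θ : SignalStructure) (f : ℕ → ℝ) (hf : IsAggregator f) :
    regret 2 f (rep 2 θ (psi lam)) ≤ 6 := by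
  have h := regret_le 2 f hf (rep 2 θ (psi lam))
  have ht0 : jointProb 2 (rep 2 θ (psi lam)) true 0
      = θ.prior * ((1 - reportProb θ (psi lam) true) * (1 - reportProb θ (psi lam) true)) := by
    rw [rep, jp2]; norm_num
  have hf0 : jointProb 2 (rep 2 θ (psi lam)) false 0
      = (1 - θ.prior) * ((1 - reportProb θ (psi lam) false) * (1 - reportProb θ (psi lam) false)) := by
    rw [rep, jp2]; norm_num
  have ht1 : jointProb 2 (rep 2 θ (psi lam)) true 1
      = θ.prior * (2 * reportProb θ (psi lam) true * (1 - reportProb θ (psi lam) true)) := by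
    rw [rep, jp2]; norm_num
  have hf1 : jointProb 2 (rep 2 θ (psi lam)) false 1
      = (1 - θ.prior) * (2 * reportProb θ (psi lam) false * (1 - reportProb θ (psi lam) false)) := by
    rw [rep, jp2]; norm_num
  have ht2 : jointProb 2 (rep 2 θ (psi lam)) true 2
      = θ.prior * (reportProb θ (psi lam) true * reportProb θ (psi lam) true) := by
    rw [rep, jp2]; norm_num
  have hf2 : jointProb 2 (rep 2 θ (psi lam)) false 2
      = (1 - θ.prior) * (reportProb θ (psi lam) false * reportProb θ (psi lam) false) := by
    rw [rep, jp2]; norm_num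
  have hμ0 := θ.prior_nonneg
  have hμ1 := θ.prior_le_one
  have hq00 := reportProb_nonneg θ lam false
  have hq01 := reportProb_le_one θ lam false
  have hq10 := reportProb_nonneg θ lam true
  have hq11 := reportProb_le_one θ lam true
  have hμ0' : (0:ℝ) ≤ 1 - θ.prior := by linarith
  have hμ1' : (1:ℝ) - θ.prior ≤ 1 := by linarith
  have sq1 : 0 ≤ (1 - reportProb θ (psi lam) true) * (1 - reportProb θ (psi lam) true)
      ∧ (1 - reportProb θ (psi lam) true) * (1 - reportProb θ (psi lam) true) ≤ 1 :=
    unit_mul (by linarith) (by linarith) (by linarith) (by linarith)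
  have sq0 : 0 ≤ (1 - reportProb θ (psi lam) false) * (1 - reportProb θ (psi lam) false)
      ∧ (1 - reportProb θ (psi lam) false) * (1 - reportProb θ (psi lam) false) ≤ 1 :=
    unit_mul (by linarith) (by linarith) (by linarith) (by linarith)
  have m1 : 0 ≤ 2 * reportProb θ (psi lam) true * (1 - reportProb θ (psi lam) true)
      ∧ 2 * reportProb θ (psi lam) true * (1 - reportProb θ (psi lam) true) ≤ 1 := by
    constructor
    · apply mul_nonneg (by linarith) (by linarith)
    · nlinarith [sq_nonneg (2 * reportProb θ (psi lam) true - 1)]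
  have m0 : 0 ≤ 2 * reportProb θ (psi lam) false * (1 - reportProb θ (psi lam) false)
      ∧ 2 * reportProb θ (psi lam) false * (1 - reportProb θ (psi lam) false) ≤ 1 := by
    constructor
    · apply mul_nonneg (by linarith) (by linarith)
    · nlinarith [sq_nonneg (2 * reportProb θ (psi lam) false - 1)]
  have p1 : 0 ≤ reportProb θ (psi lam) true * reportProb θ (psi lam) true
      ∧ reportProb θ (psi lam) true * reportProb θ (psi lam) true ≤ 1 :=
    unit_mul hq10 hq11 hq10 hq11
  have p0 : 0 ≤ reportProb θ (psi lam) false * reportProb θ (psi lam) false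
      ∧ reportProb θ (psi lam) false * reportProb θ (psi lam) false ≤ 1 :=
    unit_mul hq00 hq01 hq00 hq01
  have b0 : |jointProb 2 (rep 2 θ (psi lam)) true 0 - jointProb 2 (rep 2 θ (psi lam)) false 0| ≤ 1 := by
    rw [ht0, hf0]
    have u1 := unit_mul hμ0 hμ1 sq1.1 sq1.2
    have u2 := unit_mul hμ0' hμ1' sq0.1 sq0.2
    exact abs_sub_le_one u1.1 u1.2 u2.1 u2.2
  have b1 : |jointProb 2 (rep 2 θ (psi lam)) true 1 - jointProb 2 (rep 2 θ (psi lam)) false 1| ≤ 1 := by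
    rw [ht1, hf1]
    have u1 := unit_mul hμ0 hμ1 m1.1 m1.2
    have u2 := unit_mul hμ0' hμ1' m0.1 m0.2
    exact abs_sub_le_one u1.1 u1.2 u2.1 u2.2
  have b2 : |jointProb 2 (rep 2 θ (psi lam)) true 2 - jointProb 2 (rep 2 θ (psi lam)) false 2| ≤ 1 := by
    rw [ht2, hf2]
    have u1 := unit_mul hμ0 hμ1 p1.1 p1.2
    have u2 := unit_mul hμ0' hμ1' p0.1 p0.2
    exact abs_sub_le_one u1.1 u1.2 u2.1 u2.2
  have e : ∑ x ∈ Finset.range 3,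
      |jointProb 2 (rep 2 θ (psi lam)) true x - jointProb 2 (rep 2 θ (psi lam)) false x|
      = |jointProb 2 (rep 2 θ (psi lam)) true 0 - jointProb 2 (rep 2 θ (psi lam)) false 0|
        + |jointProb 2 (rep 2 θ (psi lam)) true 1 - jointProb 2 (rep 2 θ (psi lam)) false 1|
        + |jointProb 2 (rep 2 θ (psi lam)) true 2 - jointProb 2 (rep 2 θ (psi lam)) false 2| := by
    rw [Finset.sum_range_succ, Finset.sum_range_succ, Finset.sum_range_one]
  rw [show (2:ℕ) + 1 = 3 from rfl, e] at h
  linarith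

lemma bdd2 (lam : ℝ) (f : ℕ → ℝ) (hf : IsAggregator f) :
    BddAbove {t : ℝ | ∃ r ∈ repSet 2 lam, t = regret 2 f r} := by
  refine ⟨6, ?_⟩
  rintro t ⟨r, ⟨θ, rfl⟩, rfl⟩
  exact bound2 lam θ f hf

lemma wle2 (lam : ℝ) (hlam : 0 < lam) (f : ℕ → ℝ) (hf : IsAggregator f) :
    worstRegret 2 lam (fmaj 2) ≤ worstRegret 2 lam f := by
  have hbdd := bdd2 lam f hf
  apply Real.sSup_le _ (worst_nonneg 2 lam f hf hbdd)
  rintro t ⟨r, ⟨θ, rfl⟩, rfl⟩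
  have h1 := dom2 lam hlam θ f hf
  have h2 := flip2 lam θ f
  have h3 : regret 2 f (rep 2 θ (psi lam)) ≤ worstRegret 2 lam f :=
    le_csSup hbdd ⟨_, ⟨θ, rfl⟩, rfl⟩
  have h4 : regret 2 f (rep 2 (flipS θ) (psi lam)) ≤ worstRegret 2 lam f :=
    le_csSup hbdd ⟨_, ⟨flipS θ, rfl⟩, rfl⟩
  rw [h2] at h4
  linarith

/-- **Majority voting is optimally robust for one or two experts.** For `n ∈ {1, 2}` and
every finite rationality level `λ > 0`, the worst-case regret of majority voting over all
c.i.i.d.-induced report structures equals the minimax regret over all aggregators. -/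
theorem majority_voting_optimal_robust_small (n : ℕ) (hn : n = 1 ∨ n = 2)
    (lam : ℝ) (hlam : 0 < lam) :
    worstRegret n lam (fmaj n) =
      sInf {t : ℝ | ∃ f : ℕ → ℝ, IsAggregator f ∧ t = worstRegret n lam f} := by
  have hmem : worstRegret n lam (fmaj n)
      ∈ {t : ℝ | ∃ f : ℕ → ℝ, IsAggregator f ∧ t = worstRegret n lam f} :=
    ⟨fmaj n, fmaj_agg n, rfl⟩
  have hlb : ∀ t ∈ {t : ℝ | ∃ f : ℕ → ℝ, IsAggregator f ∧ t = worstRegret n lam f},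
      worstRegret n lam (fmaj n) ≤ t := by
    rintro t ⟨f, hf, rfl⟩
    rcases hn with rfl | rfl
    · exact wle1 lam hlam f hf
    · exact wle2 lam hlam f hf
  exact le_antisymm (le_csInf ⟨_, hmem⟩ hlb) (csInf_le ⟨_, hlb⟩ hmem)
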